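/- arXiv:1309.4786 — 2 statements merged into one kernel-verified Lean document; each statement's English description precedes it below -/
import Mathlib

section
/- Let Γ be a compact group with normalized Haar measure m, and let α₀ : Γ → Γ be a continuous surjective endomorphism with finite kernel of cardinality strictly greater than 1. Then for each n ∈ ℕ, the set Bₙ = {x ∈ Γ : α₀ⁿ(x) = x} has Haar measure zero. -/
open MeasureTheory

theorem stmt_3 {Γ : Type*} [Group Γ] [TopologicalSpace Γ] [IsTopologicalGroup Γ]
    [CompactSpace Γ] [T2Space Γ] [MeasurableSpace Γ] [BorelSpace Γ]
    (m : Measure Γ) [m.IsHaarMeasure] (hm : m Set.univ = 1)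
    (α₀ : Γ →* Γ) (hcont : Continuous α₀) (hsurj : Function.Surjective α₀)
    (hker : (α₀.ker : Set Γ).Finite) (hcard : 1 < Nat.card α₀.ker)
    (n : ℕ) (hn : 0 < n) :
    m {x : Γ | (⇑α₀)^[n] x = x} = 0 := by
  -- m is preserved by α₀, hence by its iterates
  have hmp : MeasurePreserving α₀ m m := α₀.measurePreserving hcont hsurj rfl
  have hmpn : MeasurePreserving ((⇑α₀)^[n]) m m := hmp.iterate n
  set B : Set Γ := {x : Γ | (⇑α₀)^[n] x = x} with hB
  have hcontn : Continuous ((⇑α₀)^[n]) := hcont.iterate n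
  have hBmeas : MeasurableSet B := (isClosed_eq hcontn continuous_id).measurableSet
  -- pick a nontrivial element of the kernel
  have : Finite α₀.ker := hker.to_subtype
  have : Nontrivial α₀.ker := Finite.one_lt_card_iff_nontrivial.mp hcard
  obtain ⟨k, hk1⟩ := exists_ne (1 : α₀.ker)
  have hk1' : (k : Γ) ≠ 1 := fun h => hk1 (Subtype.ext (by simpa using h))
  have hk : (⇑α₀)^[n] (k : Γ) = 1 := by
    obtain ⟨j, rfl⟩ := Nat.exists_eq_succ_of_ne_zero hn.ne'
    have hk0 : α₀ (k : Γ) = 1 := MonoidHom.mem_ker.mp k.2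
    rw [Function.iterate_succ_apply, hk0, iterate_map_one]
  have hmul : ∀ a b : Γ, (⇑α₀)^[n] (a * b) = (⇑α₀)^[n] a * (⇑α₀)^[n] b :=
    fun a b => iterate_map_mul α₀ n a b
  -- B and k • B are both contained in the preimage of B under α^[n]
  have hsub : B ∪ (fun x => (k : Γ) * x) '' B ⊆ ((⇑α₀)^[n]) ⁻¹' B := by
    rintro x (hx | ⟨b, hb, rfl⟩)
    · have hx' : (⇑α₀)^[n] x = x := hx
      show (⇑α₀)^[n] ((⇑α₀)^[n] x) = (⇑α₀)^[n] x
      simp only [hx']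
    · show (⇑α₀)^[n] ((⇑α₀)^[n] ((k : Γ) * b)) = (⇑α₀)^[n] ((k : Γ) * b)
      have hb' : (⇑α₀)^[n] b = b := hb
      simp only [hmul, hk, one_mul, hb']
  -- disjointness
  have hdisj : Disjoint B ((fun x => (k : Γ) * x) '' B) := by
    rw [Set.disjoint_left]
    rintro x hx ⟨b, hb, rfl⟩
    have hb' : (⇑α₀)^[n] b = b := hb
    have hx' : (⇑α₀)^[n] ((k : Γ) * b) = (k : Γ) * b := hx
    rw [hmul, hk, one_mul, hb'] at hx'
    exact hk1' (mul_right_cancel (b := b) (by rw [one_mul]; exact hx'.symm))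
  have himg : (fun x => (k : Γ) * x) '' B = (fun x => (k : Γ)⁻¹ * x) ⁻¹' B := by
    ext x
    constructor
    · rintro ⟨b, hb, rfl⟩; simpa using hb
    · intro h; exact ⟨(k : Γ)⁻¹ * x, h, by simp⟩
  have hkBmeas : MeasurableSet ((fun x => (k : Γ) * x) '' B) := by
    rw [himg]; exact hBmeas.preimage (measurable_const_mul _)
  have hkB : m ((fun x => (k : Γ) * x) '' B) = m B := by
    rw [himg, measure_preimage_mul]
  have hpre : m (((⇑α₀)^[n]) ⁻¹' B) = m B := hmpn.measure_preimage hBmeas.nullMeasurableSet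
  have hunion : m B + m B ≤ m B := by
    calc m B + m B = m (B ∪ (fun x => (k : Γ) * x) '' B) := by
          rw [measure_union hdisj hkBmeas, hkB]
      _ ≤ m (((⇑α₀)^[n]) ⁻¹' B) := measure_mono hsub
      _ = m B := hpre
  have hfin : m B ≠ ⊤ := by
    have : m B ≤ 1 := hm ▸ measure_mono (Set.subset_univ B)
    exact (lt_of_le_of_lt this (by norm_num)).ne
  by_contra h
  exact absurd (lt_of_lt_of_le (ENNReal.lt_add_right hfin h) hunion) (lt_irrefl _)
end

section
/- Let Γ be a compact group and α₀ : Γ → Γ a continuous surjective endomorphism with finite kernel of cardinality strictly greater than 1. Then the set of periodic points L = {x ∈ Γ : α₀ⁿ(x) = x for some n ≥ 1} has empty interior. -/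
theorem stmt_4 {Γ : Type*} [Group Γ] [TopologicalSpace Γ] [IsTopologicalGroup Γ]
    [CompactSpace Γ] [T2Space Γ] [SecondCountableTopology Γ]
    (α₀ : Γ →* Γ) (hcont : Continuous α₀) (hsurj : Function.Surjective α₀)
    (hker : (α₀.ker : Set Γ).Finite) (hcard : 1 < Nat.card α₀.ker) :
    interior {x : Γ | ∃ n : ℕ, 1 ≤ n ∧ (⇑α₀)^[n] x = x} = ∅ := by
  -- kernel has a nontrivial element
  have : Finite α₀.ker := hker.to_subtype
  obtain ⟨a, ha, hane⟩ : ∃ a : Γ, α₀ a = 1 ∧ a ≠ 1 := by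
    rw [Subgroup.one_lt_card_iff_ne_bot] at hcard
    obtain ⟨⟨a, haker⟩, hane⟩ := Subgroup.ne_bot_iff_exists_ne_one.mp hcard
    exact ⟨a, haker, by simpa using hane⟩
  -- each fixed point set of an iterate (n ≥ 1) has empty interior
  have key : ∀ n : ℕ, 1 ≤ n → interior {x : Γ | (⇑α₀)^[n] x = x} = ∅ := by
    intro n hn
    by_contra h
    obtain ⟨g, hg⟩ := Set.nonempty_iff_ne_empty.mpr h
    -- the fixed point subgroup
    set H : Subgroup Γ := {
      carrier := {x : Γ | (⇑α₀)^[n] x = x}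
      mul_mem' := fun {x y} hx hy => by
        simp only [Set.mem_setOf_eq] at *; rw [iterate_map_mul, hx, hy]
      one_mem' := iterate_map_one α₀ n
      inv_mem' := fun {x} hx => by
        simp only [Set.mem_setOf_eq] at *; rw [iterate_map_inv, hx] } with hHdef
    have hHopen : IsOpen (H : Set Γ) :=
      Subgroup.isOpen_of_mem_nhds H (mem_interior_iff_mem_nhds.mp hg)
    have hfin : Finite (Γ ⧸ H) := Subgroup.quotient_finite_of_isOpen H hHopen
    have hβsurj : Function.Surjective (⇑α₀)^[n] := hsurj.iterate n
    -- β induces a self-map of the quotient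
    have hcompat : ∀ x y : Γ, (QuotientGroup.leftRel H) x y →
        (QuotientGroup.leftRel H) ((⇑α₀)^[n] x) ((⇑α₀)^[n] y) := by
      intro x y hxy
      rw [QuotientGroup.leftRel_apply] at *
      have hmem : (⇑α₀)^[n] (x⁻¹ * y) = x⁻¹ * y := hxy
      rw [iterate_map_mul, iterate_map_inv] at hmem
      rw [hmem]; exact hxy
    set f : Γ ⧸ H → Γ ⧸ H := Quotient.map' (⇑α₀)^[n] hcompat with hf
    have hfsurj : Function.Surjective f := fun q => by
      obtain ⟨x, rfl⟩ := Quotient.exists_rep q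
      obtain ⟨y, hy⟩ := hβsurj x
      exact ⟨Quotient.mk'' y, by simp [hf, Quotient.map'_mk'', hy]⟩
    have hfinj : Function.Injective f :=
      Finite.injective_iff_surjective.mpr hfsurj
    -- a is in ker of the iterate, hence f ⟦a⟧ = f ⟦1⟧, hence a ∈ H, hence a = 1
    have haker : (⇑α₀)^[n] a = 1 := by
      obtain ⟨m, rfl⟩ := Nat.exists_eq_add_of_le hn
      rw [add_comm, Function.iterate_add_apply]
      simp [Function.iterate_one, ha, iterate_map_one]
    have : f (Quotient.mk'' a) = f (Quotient.mk'' 1) := by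
      simp only [hf, Quotient.map'_mk'', haker, iterate_map_one]
    have haH : a ∈ H := by
      have := hfinj this
      rw [Quotient.eq'', QuotientGroup.leftRel_apply, mul_one] at this
      exact H.inv_mem_iff.mp this
    exact hane (by rw [← haH]; exact haker)
  -- Baire category argument
  rw [interior_eq_empty_iff_dense_compl]
  have hsub : (⋂ n : ℕ, {x : Γ | (⇑α₀)^[n + 1] x = x}ᶜ) ⊆
      {x : Γ | ∃ n : ℕ, 1 ≤ n ∧ (⇑α₀)^[n] x = x}ᶜ := by
    intro x hx ⟨n, hn, hfix⟩
    obtain ⟨m, rfl⟩ := Nat.exists_eq_add_of_le hn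
    exact Set.mem_iInter.mp hx m (by simpa [add_comm] using hfix)
  refine Dense.mono hsub (dense_iInter_of_isOpen (fun n => ?_) (fun n => ?_))
  · exact (isClosed_eq ((hcont.iterate _)) continuous_id).isOpen_compl
  · rw [← interior_eq_empty_iff_dense_compl]
    exact key (n + 1) (Nat.succ_le_succ (Nat.zero_le n))
end
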